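/- For the category D = (• → •), every diagram of the form T_X = (X → *) for an arbitrary set X is an orbit: colim_D T_X ≅ *. Moreover if X is nonempty then T_X is a regular orbit (lim T_X ≅ X ≠ ∅). Consequently there is a proper class (one for each set X up to isomorphism) of pairwise non-isomorphic regular orbits over D. -/

import Mathlib

open CategoryTheory CategoryTheory.Limits

universe u

theorem arrow_diagrams_regular_orbits
    (X X' : Type u) (T T' : Fin 2 ⥤ Type u)
    (e : T.obj 0 ≃ X) (h1n : Nonempty (T.obj 1)) (h1s : Subsingleton (T.obj 1))
    (e' : T'.obj 0 ≃ X') (h1n' : Nonempty (T'.obj 1)) (h1s' : Subsingleton (T'.obj 1)) :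
    (Nonempty (colimit T) ∧ Subsingleton (colimit T)) ∧
    Nonempty (limit T ≃ X) ∧
    (Nonempty X → Nonempty (limit T)) ∧
    (Nonempty (T ≅ T') ↔ Nonempty (X ≃ X')) := by
  haveI : ∀ i : Fin 2, Unique (i ⟶ (1 : Fin 2)) := fun i =>
    ⟨⟨homOfLE (Fin.le_last i)⟩, fun _ => Subsingleton.elim _ _⟩
  haveI : ∀ i : Fin 2, Unique ((0 : Fin 2) ⟶ i) := fun i =>
    ⟨⟨homOfLE (Fin.zero_le i)⟩, fun _ => Subsingleton.elim _ _⟩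
  have hterm : IsTerminal (1 : Fin 2) := IsTerminal.ofUnique _
  have hinit : IsInitial (0 : Fin 2) := IsInitial.ofUnique _
  have ecolim : colimit T ≃ T.obj 1 := ((colimit.isColimit T).coconePointUniqueUpToIso (colimitOfDiagramTerminal hterm T)).toEquiv
  have elim : limit T ≃ T.obj 0 := ((limit.isLimit T).conePointUniqueUpToIso (limitOfDiagramInitial hinit T)).toEquiv
  refine ⟨⟨⟨ecolim.symm h1n.some⟩, ⟨fun a b => ecolim.injective (Subsingleton.elim _ _)⟩⟩,
    ⟨elim.trans e⟩, fun ⟨x⟩ => ⟨elim.symm (e.symm x)⟩, ?_, ?_⟩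
  · rintro ⟨i⟩
    exact ⟨(e.symm.trans (i.app 0).toEquiv).trans e'⟩
  · rintro ⟨q⟩
    refine ⟨NatIso.ofComponents (fun i => ?_) (fun {i j} f => ?_)⟩
    · exact match i with
      | ⟨0, _⟩ => ((e.trans q).trans e'.symm).toIso
      | ⟨1, _⟩ => (@Equiv.ofBijective _ _ (fun _ => h1n'.some) ⟨fun a b _ => @Subsingleton.elim _ h1s a b, fun y => ⟨h1n.some, @Subsingleton.elim _ h1s' _ y⟩⟩).toIso
    · match i, j with
      | ⟨0, _⟩, ⟨0, _⟩ =>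
          have : f = 𝟙 _ := Subsingleton.elim _ _
          subst this; simp
      | ⟨0, _⟩, ⟨1, _⟩ => ext x; exact @Subsingleton.elim _ h1s' _ _
      | ⟨1, _⟩, ⟨1, _⟩ => ext x; exact @Subsingleton.elim _ h1s' _ _
      | ⟨1, _⟩, ⟨0, _⟩ => exact absurd (Fin.le_def.mp (leOfHom f)) (by simp)
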